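/- Let φ₁, φ₂ ∈ ℝ² be linearly independent with 0 < ‖φ₁‖ < ‖φ₂‖ and ⟨φ₁, φ₂⟩ ≠ 0, and let 0 < ε < 1. For scalars c₁, c₂ ∈ [1 − ε, 1 + ε], let κ(c₁, c₂) denote the condition number (ratio of largest to smallest eigenvalue) of the frame operator of {c₁φ₁, c₂φ₂}. Then: (1) if (1 + ε)‖φ₁‖ ≥ (1 − ε)‖φ₂‖, the minimum of κ over [1 − ε, 1 + ε]² is attained at any (c₁, c₂) with c₁‖φ₁‖ = c₂‖φ₂‖, and equals (1 + t)/(1 − t) where t = |⟨φ₁, φ₂⟩|/(‖φ₁‖‖φ₂‖); (2) if (1 + ε)‖φ₁‖ ≤ (1 − ε)‖φ₂‖, the minimum of κ over [1 − ε, 1 + ε]² is attained at (c₁, c₂) = (1 + ε, 1 − ε). -/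

import Mathlib

open scoped RealInnerProductSpace BigOperators

/-- The frame operator S(φ) = Σᵢ ⟪φ, ψᵢ⟫ • ψᵢ of a finite family in ℝ². -/
noncomputable def frameOperator {m : ℕ} (ψ : Fin m → EuclideanSpace ℝ (Fin 2)) :
    EuclideanSpace ℝ (Fin 2) →L[ℝ] EuclideanSpace ℝ (Fin 2) :=
  ∑ i, (innerSL ℝ (ψ i)).smulRight (ψ i)

/-- The condition number of an operator: ratio of its largest to smallest eigenvalue. -/
noncomputable def condNum
    (S : EuclideanSpace ℝ (Fin 2) →L[ℝ] EuclideanSpace ℝ (Fin 2)) : ℝ :=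
  sSup (spectrum ℝ S) / sInf (spectrum ℝ S)

noncomputable def kappa (T Δ : ℝ) : ℝ := (T + Real.sqrt Δ) / (T - Real.sqrt Δ)

lemma real_lb (x y g t : ℝ) (hx : 0 < x) (hy : 0 < y) (ht0 : 0 ≤ t) (ht1 : t < 1)
    (hg : g = t ^ 2 * (x * y)) :
    (1 + t) / (1 - t) ≤ kappa (x + y) ((x + y) ^ 2 - 4 * (x * y - g)) := by
  have ht2 : t ^ 2 < 1 := by nlinarith
  have hΔ0 : 0 ≤ (x + y) ^ 2 - 4 * (x * y - g) := by
    rw [hg]; nlinarith [sq_nonneg (x - y), sq_nonneg t, mul_pos hx hy]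
  set s : ℝ := Real.sqrt ((x + y) ^ 2 - 4 * (x * y - g)) with hsdef
  have hs2 : s ^ 2 = (x + y) ^ 2 - 4 * (x * y - g) := Real.sq_sqrt hΔ0
  have hs0 : 0 ≤ s := Real.sqrt_nonneg _
  have hT0 : 0 < x + y := by linarith
  have hΔT : (x + y) ^ 2 - 4 * (x * y - g) < (x + y) ^ 2 := by
    rw [hg]
    nlinarith [mul_pos (mul_pos hx hy) (show (0:ℝ) < 1 - t ^ 2 by linarith)]
  have hsT : s < x + y := by
    rw [hsdef]
    calc Real.sqrt ((x + y) ^ 2 - 4 * (x * y - g)) < Real.sqrt ((x + y) ^ 2) :=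
          Real.sqrt_lt_sqrt hΔ0 hΔT
      _ = x + y := Real.sqrt_sq hT0.le
  have hkey : t * (x + y) ≤ s := by
    have h1 : (t * (x + y)) ^ 2 ≤ s ^ 2 := by
      rw [hs2, hg]; nlinarith [sq_nonneg (x - y)]
    calc t * (x + y) = Real.sqrt ((t * (x + y)) ^ 2) :=
          (Real.sqrt_sq (mul_nonneg ht0 hT0.le)).symm
      _ ≤ Real.sqrt (s ^ 2) := Real.sqrt_le_sqrt h1
      _ = s := Real.sqrt_sq hs0
  rw [kappa, div_le_div_iff₀ (by linarith) (by linarith)]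
  nlinarith [hkey]

lemma real_eq (x t : ℝ) (hx : 0 < x) (ht0 : 0 ≤ t) (ht1 : t < 1) :
    kappa (x + x) ((x + x) ^ 2 - 4 * (x * x - t ^ 2 * (x * x))) = (1 + t) / (1 - t) := by
  have h : (x + x) ^ 2 - 4 * (x * x - t ^ 2 * (x * x)) = (2 * t * x) ^ 2 := by ring
  rw [kappa, h, Real.sqrt_sq (by positivity)]
  rw [div_eq_div_iff
    (by nlinarith [mul_pos hx (show (0:ℝ) < 1 - t by linarith)]) (by linarith)]
  ring

lemma real_mono (x y x' y' t : ℝ) (hx : 0 < x) (hxx : x ≤ x') (hy' : 0 < y')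
    (hyy : y' ≤ y) (hxy : x' ≤ y') (ht0 : 0 ≤ t) (ht1 : t < 1) :
    kappa (x' + y') ((x' + y') ^ 2 - 4 * (x' * y' - t ^ 2 * (x' * y'))) ≤
      kappa (x + y) ((x + y) ^ 2 - 4 * (x * y - t ^ 2 * (x * y))) := by
  have hx' : 0 < x' := lt_of_lt_of_le hx hxx
  have hy : 0 < y := lt_of_lt_of_le hy' hyy
  have ht2 : t ^ 2 < 1 := by nlinarith
  have hΔ0 : 0 ≤ (x + y) ^ 2 - 4 * (x * y - t ^ 2 * (x * y)) := by
    nlinarith [sq_nonneg (x - y), sq_nonneg t, mul_pos hx hy]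
  have hΔ'0 : 0 ≤ (x' + y') ^ 2 - 4 * (x' * y' - t ^ 2 * (x' * y')) := by
    nlinarith [sq_nonneg (x' - y'), sq_nonneg t, mul_pos hx' hy']
  set s : ℝ := Real.sqrt ((x + y) ^ 2 - 4 * (x * y - t ^ 2 * (x * y))) with hsdef
  set s' : ℝ := Real.sqrt ((x' + y') ^ 2 - 4 * (x' * y' - t ^ 2 * (x' * y'))) with hs'def
  have hs2 : s ^ 2 = (x + y) ^ 2 - 4 * (x * y - t ^ 2 * (x * y)) := Real.sq_sqrt hΔ0
  have hs'2 : s' ^ 2 = (x' + y') ^ 2 - 4 * (x' * y' - t ^ 2 * (x' * y')) := Real.sq_sqrt hΔ'0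
  have hs0 : 0 ≤ s := Real.sqrt_nonneg _
  have hs'0 : 0 ≤ s' := Real.sqrt_nonneg _
  have hT0 : 0 < x + y := by linarith
  have hT'0 : 0 < x' + y' := by linarith
  have hΔT : (x + y) ^ 2 - 4 * (x * y - t ^ 2 * (x * y)) < (x + y) ^ 2 := by
    nlinarith [mul_pos (mul_pos hx hy) (show (0:ℝ) < 1 - t ^ 2 by linarith)]
  have hΔ'T : (x' + y') ^ 2 - 4 * (x' * y' - t ^ 2 * (x' * y')) < (x' + y') ^ 2 := by
    nlinarith [mul_pos (mul_pos hx' hy') (show (0:ℝ) < 1 - t ^ 2 by linarith)]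
  have hsT : s < x + y := by
    rw [hsdef]
    calc Real.sqrt ((x + y) ^ 2 - 4 * (x * y - t ^ 2 * (x * y))) <
          Real.sqrt ((x + y) ^ 2) := Real.sqrt_lt_sqrt hΔ0 hΔT
      _ = x + y := Real.sqrt_sq hT0.le
  have hs'T : s' < x' + y' := by
    rw [hs'def]
    calc Real.sqrt ((x' + y') ^ 2 - 4 * (x' * y' - t ^ 2 * (x' * y'))) <
          Real.sqrt ((x' + y') ^ 2) := Real.sqrt_lt_sqrt hΔ'0 hΔ'T
      _ = x' + y' := Real.sqrt_sq hT'0.le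
  have h1 : 0 ≤ x' * y - x * y' := by nlinarith
  have h2 : 0 ≤ y * y' - x * x' := by nlinarith
  have hst : s' * (x + y) ≤ s * (x' + y') := by
    have hΔkey : (s' * (x + y)) ^ 2 ≤ (s * (x' + y')) ^ 2 := by
      have hprod : 0 ≤ (1 - t ^ 2) * ((x' * y - x * y') * (y * y' - x * x')) :=
        mul_nonneg (by linarith) (mul_nonneg h1 h2)
      have hident : ((x + y) ^ 2 - 4 * (x * y - t ^ 2 * (x * y))) * (x' + y') ^ 2 -
          ((x' + y') ^ 2 - 4 * (x' * y' - t ^ 2 * (x' * y'))) * (x + y) ^ 2 =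
          4 * ((1 - t ^ 2) * ((x' * y - x * y') * (y * y' - x * x'))) := by ring
      calc (s' * (x + y)) ^ 2 = s' ^ 2 * (x + y) ^ 2 := by ring
        _ ≤ s ^ 2 * (x' + y') ^ 2 := by rw [hs2, hs'2]; linarith [hprod, hident]
        _ = (s * (x' + y')) ^ 2 := by ring
    calc s' * (x + y) = Real.sqrt ((s' * (x + y)) ^ 2) :=
          (Real.sqrt_sq (mul_nonneg hs'0 hT0.le)).symm
      _ ≤ Real.sqrt ((s * (x' + y')) ^ 2) := Real.sqrt_le_sqrt hΔkey
      _ = s * (x' + y') := Real.sqrt_sq (mul_nonneg hs0 hT'0.le)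
  rw [kappa, kappa, div_le_div_iff₀ (by linarith) (by linarith)]
  nlinarith [hst]


lemma frame_eq_matrix (u v : EuclideanSpace ℝ (Fin 2)) :
    frameOperator ![u, v] =
      Matrix.toEuclideanCLM (𝕜 := ℝ)
        (Matrix.of fun i j => u i * u j + v i * v j) := by
  unfold frameOperator
  ext x i
  have h : Matrix.toEuclideanCLM (𝕜 := ℝ)
        (Matrix.of fun i j => u i * u j + v i * v j) x =
      (WithLp.equiv _ _).symm (Matrix.toLin'
        (Matrix.of fun i j => u i * u j + v i * v j) (WithLp.equiv _ _ x)) := rfl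
  rw [h]
  simp [Matrix.toLin'_apply, Matrix.mulVec, dotProduct, Fin.sum_univ_two,
    PiLp.inner_apply, RCLike.inner_apply]
  fin_cases i <;> simp <;> ring

lemma quad_spectrum (M : Matrix (Fin 2) (Fin 2) ℝ) (T D s : ℝ)
    (hT : T = M 0 0 + M 1 1) (hD : D = M 0 0 * M 1 1 - M 0 1 * M 1 0)
    (hs : s ^ 2 = T ^ 2 - 4 * D) :
    spectrum ℝ M = {(T - s) / 2, (T + s) / 2} := by
  subst hT hD
  ext μ
  have hmem : μ ∈ spectrum ℝ M ↔ (μ - M 0 0) * (μ - M 1 1) - M 0 1 * M 1 0 = 0 := by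
    rw [spectrum.mem_iff, Matrix.isUnit_iff_isUnit_det, isUnit_iff_ne_zero, not_not,
      Matrix.det_fin_two]
    simp [Matrix.algebraMap_matrix_apply]
  rw [hmem]
  have hfact : (μ - M 0 0) * (μ - M 1 1) - M 0 1 * M 1 0 =
      (μ - (M 0 0 + M 1 1 - s) / 2) * (μ - (M 0 0 + M 1 1 + s) / 2) := by
    linear_combination hs / 4
  rw [hfact, mul_eq_zero, sub_eq_zero, sub_eq_zero]
  simp [Set.mem_insert_iff, Set.mem_singleton_iff]

lemma condNum_formula (u v : EuclideanSpace ℝ (Fin 2))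
    (hD : ⟪u, v⟫ ^ 2 < ‖u‖ ^ 2 * ‖v‖ ^ 2) :
    condNum (frameOperator ![u, v]) =
      kappa (‖u‖ ^ 2 + ‖v‖ ^ 2)
        ((‖u‖ ^ 2 + ‖v‖ ^ 2) ^ 2 - 4 * (‖u‖ ^ 2 * ‖v‖ ^ 2 - ⟪u, v⟫ ^ 2)) := by
  have hN1 : ‖u‖ ^ 2 = u 0 * u 0 + u 1 * u 1 := by
    rw [← real_inner_self_eq_norm_sq]
    simp only [PiLp.inner_apply, RCLike.inner_apply, Fin.sum_univ_two, conj_trivial]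
  have hN2 : ‖v‖ ^ 2 = v 0 * v 0 + v 1 * v 1 := by
    rw [← real_inner_self_eq_norm_sq]
    simp only [PiLp.inner_apply, RCLike.inner_apply, Fin.sum_univ_two, conj_trivial]
  have hP : ⟪u, v⟫ = u 0 * v 0 + u 1 * v 1 := by
    simp [PiLp.inner_apply, RCLike.inner_apply, Fin.sum_univ_two]; ring
  set T : ℝ := ‖u‖ ^ 2 + ‖v‖ ^ 2 with hTdef
  set Δ : ℝ := T ^ 2 - 4 * (‖u‖ ^ 2 * ‖v‖ ^ 2 - ⟪u, v⟫ ^ 2) with hΔdef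
  have hΔ0 : 0 ≤ Δ := by
    rw [hΔdef, hTdef]; nlinarith [sq_nonneg (‖u‖ ^ 2 - ‖v‖ ^ 2), sq_nonneg (⟪u, v⟫)]
  set s : ℝ := Real.sqrt Δ with hsdef
  have hs2 : s ^ 2 = Δ := Real.sq_sqrt hΔ0
  have hs0 : 0 ≤ s := Real.sqrt_nonneg _
  have hT0 : 0 < T := by
    rw [hTdef]; nlinarith [sq_nonneg (⟪u, v⟫), sq_nonneg ‖u‖, sq_nonneg ‖v‖]
  have hΔT : Δ < T ^ 2 := by rw [hΔdef]; nlinarith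
  have hsT : s < T := by
    rw [hsdef]
    calc Real.sqrt Δ < Real.sqrt (T ^ 2) := Real.sqrt_lt_sqrt hΔ0 hΔT
      _ = T := by rw [Real.sqrt_sq hT0.le]
  set M : Matrix (Fin 2) (Fin 2) ℝ :=
    Matrix.of fun i j => u i * u j + v i * v j with hMdef
  have hspec : spectrum ℝ M = {(T - s) / 2, (T + s) / 2} := by
    apply quad_spectrum
    · show T = (u 0 * u 0 + v 0 * v 0) + (u 1 * u 1 + v 1 * v 1)
      rw [hTdef, hN1, hN2]; ring
    · show ‖u‖ ^ 2 * ‖v‖ ^ 2 - ⟪u, v⟫ ^ 2 =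
        (u 0 * u 0 + v 0 * v 0) * (u 1 * u 1 + v 1 * v 1) -
          (u 0 * u 1 + v 0 * v 1) * (u 1 * u 0 + v 1 * v 0)
      rw [hN1, hN2, hP]; ring
    · rw [hs2, hΔdef]
  have hsup : ((T - s) / 2) ⊔ ((T + s) / 2) = (T + s) / 2 :=
    sup_eq_right.2 (by linarith)
  have hinf : ((T - s) / 2) ⊓ ((T + s) / 2) = (T - s) / 2 :=
    inf_eq_left.2 (by linarith)
  rw [condNum, frame_eq_matrix, AlgEquiv.spectrum_eq, hspec, csSup_pair, csInf_pair,
    hsup, hinf, kappa]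
  rw [div_div_div_comm]
  norm_num
  rfl

lemma condNum_smul (φ₁ φ₂ : EuclideanSpace ℝ (Fin 2))
    (hCS : ⟪φ₁, φ₂⟫ ^ 2 < ‖φ₁‖ ^ 2 * ‖φ₂‖ ^ 2)
    (c₁ c₂ : ℝ) (h1 : 0 < c₁) (h2 : 0 < c₂) :
    condNum (frameOperator ![c₁ • φ₁, c₂ • φ₂]) =
      kappa (c₁ ^ 2 * ‖φ₁‖ ^ 2 + c₂ ^ 2 * ‖φ₂‖ ^ 2)
        ((c₁ ^ 2 * ‖φ₁‖ ^ 2 + c₂ ^ 2 * ‖φ₂‖ ^ 2) ^ 2 -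
          4 * ((c₁ ^ 2 * ‖φ₁‖ ^ 2) * (c₂ ^ 2 * ‖φ₂‖ ^ 2) - (c₁ * c₂ * ⟪φ₁, φ₂⟫) ^ 2)) := by
  have hu : ‖c₁ • φ₁‖ ^ 2 = c₁ ^ 2 * ‖φ₁‖ ^ 2 := by
    rw [norm_smul, Real.norm_eq_abs, abs_of_pos h1]; ring
  have hv : ‖c₂ • φ₂‖ ^ 2 = c₂ ^ 2 * ‖φ₂‖ ^ 2 := by
    rw [norm_smul, Real.norm_eq_abs, abs_of_pos h2]; ring
  have hP : ⟪c₁ • φ₁, c₂ • φ₂⟫ = c₁ * c₂ * ⟪φ₁, φ₂⟫ := by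
    rw [real_inner_smul_left, real_inner_smul_right]; ring
  have hD : ⟪c₁ • φ₁, c₂ • φ₂⟫ ^ 2 < ‖c₁ • φ₁‖ ^ 2 * ‖c₂ • φ₂‖ ^ 2 := by
    rw [hu, hv, hP]
    have hc : 0 < c₁ ^ 2 * c₂ ^ 2 := by positivity
    nlinarith
  rw [condNum_formula _ _ hD, hu, hv, hP]

/-- Restricted scaling of a two-vector frame: with scalars confined to [1−ε, 1+ε], if the
norms can be equalized, any equalizing scaling minimizes the condition number, giving
(1+t)/(1−t) with t the normalized inner product; otherwise (1+ε, 1−ε) is optimal. -/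
theorem stmt_10 (φ₁ φ₂ : EuclideanSpace ℝ (Fin 2))
    (hind : LinearIndependent ℝ ![φ₁, φ₂])
    (h0 : 0 < ‖φ₁‖) (hlt : ‖φ₁‖ < ‖φ₂‖) (hip : ⟪φ₁, φ₂⟫ ≠ 0)
    (ε : ℝ) (hε0 : 0 < ε) (hε1 : ε < 1) :
    ((1 - ε) * ‖φ₂‖ ≤ (1 + ε) * ‖φ₁‖ →
      (∀ c₁ ∈ Set.Icc (1 - ε) (1 + ε), ∀ c₂ ∈ Set.Icc (1 - ε) (1 + ε),
        (1 + |⟪φ₁, φ₂⟫| / (‖φ₁‖ * ‖φ₂‖)) / (1 - |⟪φ₁, φ₂⟫| / (‖φ₁‖ * ‖φ₂‖))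
          ≤ condNum (frameOperator ![c₁ • φ₁, c₂ • φ₂])) ∧
      (∀ c₁ ∈ Set.Icc (1 - ε) (1 + ε), ∀ c₂ ∈ Set.Icc (1 - ε) (1 + ε),
        c₁ * ‖φ₁‖ = c₂ * ‖φ₂‖ →
          condNum (frameOperator ![c₁ • φ₁, c₂ • φ₂]) =
            (1 + |⟪φ₁, φ₂⟫| / (‖φ₁‖ * ‖φ₂‖)) / (1 - |⟪φ₁, φ₂⟫| / (‖φ₁‖ * ‖φ₂‖)))) ∧
    ((1 + ε) * ‖φ₁‖ ≤ (1 - ε) * ‖φ₂‖ →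
      ∀ c₁ ∈ Set.Icc (1 - ε) (1 + ε), ∀ c₂ ∈ Set.Icc (1 - ε) (1 + ε),
        condNum (frameOperator ![(1 + ε) • φ₁, (1 - ε) • φ₂])
          ≤ condNum (frameOperator ![c₁ • φ₁, c₂ • φ₂])) := by
  have h0' : 0 < ‖φ₂‖ := lt_trans h0 hlt
  -- strict Cauchy-Schwarz from linear independence
  have hpair : ∀ a b : ℝ, a • φ₁ + b • φ₂ = 0 → a = 0 ∧ b = 0 :=
    LinearIndependent.pair_iff.mp hind
  have hne1 : ‖φ₂‖ • φ₁ ≠ ‖φ₁‖ • φ₂ := by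
    intro heq
    have := hpair ‖φ₂‖ (-‖φ₁‖) (by rw [neg_smul, ← heq]; abel)
    exact absurd this.1 (ne_of_gt h0')
  have hne2 : ‖-φ₂‖ • φ₁ ≠ ‖φ₁‖ • (-φ₂) := by
    intro heq
    rw [norm_neg, smul_neg] at heq
    have := hpair ‖φ₂‖ ‖φ₁‖ (by rw [heq]; abel)
    exact absurd this.1 (ne_of_gt h0')
  have hcs1 : ⟪φ₁, φ₂⟫ < ‖φ₁‖ * ‖φ₂‖ := by
    exact inner_lt_norm_mul_iff_real.mpr hne1
  have hcs2 : -(‖φ₁‖ * ‖φ₂‖) < ⟪φ₁, φ₂⟫ := by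
    have h := inner_lt_norm_mul_iff_real.mpr hne2
    rw [inner_neg_right, norm_neg] at h
    linarith
  have hgram : |⟪φ₁, φ₂⟫| < ‖φ₁‖ * ‖φ₂‖ := abs_lt.2 ⟨hcs2, hcs1⟩
  have hCS : ⟪φ₁, φ₂⟫ ^ 2 < ‖φ₁‖ ^ 2 * ‖φ₂‖ ^ 2 := by
    nlinarith [abs_nonneg (⟪φ₁, φ₂⟫), sq_abs (⟪φ₁, φ₂⟫)]
  set t : ℝ := |⟪φ₁, φ₂⟫| / (‖φ₁‖ * ‖φ₂‖) with htdef
  have hprod : 0 < ‖φ₁‖ * ‖φ₂‖ := by positivity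
  have ht0 : 0 ≤ t := by positivity
  have ht1 : t < 1 := (div_lt_one hprod).2 hgram
  have htsq : ∀ c₁ c₂ : ℝ, (c₁ * c₂ * ⟪φ₁, φ₂⟫) ^ 2 =
      t ^ 2 * ((c₁ ^ 2 * ‖φ₁‖ ^ 2) * (c₂ ^ 2 * ‖φ₂‖ ^ 2)) := by
    intro c₁ c₂
    rw [htdef]
    rw [div_pow]
    have h1 : |⟪φ₁, φ₂⟫| ^ 2 = ⟪φ₁, φ₂⟫ ^ 2 := sq_abs _
    field_simp
    nlinarith [h1, congrArg (fun z => c₁ ^ 2 * c₂ ^ 2 * z) h1]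
  refine ⟨fun _ => ⟨?_, ?_⟩, ?_⟩
  · -- lower bound
    intro c₁ hc₁ c₂ hc₂
    have hc₁0 : 0 < c₁ := lt_of_lt_of_le (by linarith) hc₁.1
    have hc₂0 : 0 < c₂ := lt_of_lt_of_le (by linarith) hc₂.1
    rw [condNum_smul φ₁ φ₂ hCS c₁ c₂ hc₁0 hc₂0]
    exact real_lb _ _ _ t (by positivity) (by positivity) ht0 ht1 (htsq c₁ c₂)
  · -- equality case
    intro c₁ hc₁ c₂ hc₂ heq
    have hc₁0 : 0 < c₁ := lt_of_lt_of_le (by linarith) hc₁.1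
    have hc₂0 : 0 < c₂ := lt_of_lt_of_le (by linarith) hc₂.1
    rw [condNum_smul φ₁ φ₂ hCS c₁ c₂ hc₁0 hc₂0]
    have hxy : c₂ ^ 2 * ‖φ₂‖ ^ 2 = c₁ ^ 2 * ‖φ₁‖ ^ 2 := by
      calc c₂ ^ 2 * ‖φ₂‖ ^ 2 = (c₂ * ‖φ₂‖) ^ 2 := by ring
        _ = (c₁ * ‖φ₁‖) ^ 2 := by rw [heq]
        _ = c₁ ^ 2 * ‖φ₁‖ ^ 2 := by ring
    rw [hxy, htsq c₁ c₂, hxy]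
    exact real_eq _ t (by positivity) ht0 ht1
  · -- part 2
    intro hle c₁ hc₁ c₂ hc₂
    have hc₁0 : 0 < c₁ := lt_of_lt_of_le (by linarith) hc₁.1
    have hc₂0 : 0 < c₂ := lt_of_lt_of_le (by linarith) hc₂.1
    have hε1' : 0 < 1 - ε := by linarith
    have hε2' : 0 < 1 + ε := by linarith
    rw [condNum_smul φ₁ φ₂ hCS c₁ c₂ hc₁0 hc₂0,
      condNum_smul φ₁ φ₂ hCS (1 + ε) (1 - ε) hε2' hε1',
      htsq c₁ c₂, htsq (1 + ε) (1 - ε)]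
    apply real_mono
    · positivity
    · have h : c₁ ^ 2 ≤ (1 + ε) ^ 2 := by nlinarith [hc₁.2, hc₁0]
      exact mul_le_mul_of_nonneg_right h (sq_nonneg _)
    · exact mul_pos (pow_pos hε1' 2) (pow_pos h0' 2)
    · have h : (1 - ε) ^ 2 ≤ c₂ ^ 2 := by nlinarith [hc₂.1, hε1']
      exact mul_le_mul_of_nonneg_right h (sq_nonneg _)
    · have hsq : ((1 + ε) * ‖φ₁‖) ^ 2 ≤ ((1 - ε) * ‖φ₂‖) ^ 2 := by
        nlinarith [hle, mul_pos hε2' h0]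
      nlinarith [hsq]
    · exact ht0
    · exact ht1
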